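/- Let E_ε, A_ε ∈ ℝ^{m_ε×n_ε} with rank E_ε = m_ε; let J_f ∈ ℝ^{n_f×n_f} be arbitrary; let J_σ ∈ ℝ^{n_σ×n_σ} be nilpotent; let E_η, A_η ∈ ℝ^{m_η×n_η} with rank E_η = n_η. Set E = blkdiag(E_ε, I_{n_f}, J_σ, E_η) and A = blkdiag(A_ε, J_f, I_{n_σ}, A_η), both of size m×n with m = m_ε+n_f+n_σ+m_η and n = n_ε+n_f+n_σ+n_η. Then rank F_{n+1,[E,A]} = (n+1)(m_ε + n_f + n_η) + n·n_σ. -/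

import Mathlib

open Matrix

/-- The block matrix `F_{k,[E,A]}`: viewed as a `k × k` array of `m × n` blocks,
diagonal blocks equal `E`, superdiagonal blocks equal `A`, all other blocks zero. -/
noncomputable def Fmat (k : ℕ) {R C : Type*} [Fintype R] [Fintype C]
    (E A : Matrix R C ℝ) : Matrix (Fin k × R) (Fin k × C) ℝ :=
  Matrix.of fun p q =>
    if q.1.val = p.1.val then E p.2 q.2
    else if q.1.val = p.1.val + 1 then A p.2 q.2
    else 0

/-- The matrix `F_{k,[E,A,K]}`: `F_{k,[E,A]}` with an extra block row appended at the
bottom, having `K` in the second block column and zeros elsewhere. -/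
noncomputable def FmatK (k : ℕ) {R C : Type*} [Fintype R] [Fintype C] {r : ℕ}
    (E A : Matrix R C ℝ) (K : Matrix (Fin r) C ℝ) :
    Matrix ((Fin k × R) ⊕ Fin r) (Fin k × C) ℝ :=
  Matrix.of fun p q =>
    match p with
    | Sum.inl pr => Fmat k E A pr q
    | Sum.inr i => if q.1.val = 1 then K i q.2 else 0

/-- The generalized Wong sequence `W^i_{[E,A,B,C]}`:
`W⁰ = {0}`, `W^{i+1} = E⁻¹(A·W^i + im B) ∩ ker C`. -/
noncomputable def WongW {R : Type*} [Fintype R] {n l p : ℕ}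
    (E A : Matrix R (Fin n) ℝ) (B : Matrix R (Fin l) ℝ) (C : Matrix (Fin p) (Fin n) ℝ) :
    ℕ → Submodule ℝ (Fin n → ℝ)
  | 0 => ⊥
  | i + 1 =>
      (Submodule.comap E.mulVecLin
        (Submodule.map A.mulVecLin (WongW E A B C i) ⊔ LinearMap.range B.mulVecLin)) ⊓
        LinearMap.ker C.mulVecLin

/-- The generalized Wong sequence `V^i_{[E,A,B,C]}`:
`V⁰ = ker C`, `V^{i+1} = A⁻¹(E·V^i + im B) ∩ ker C`. -/
noncomputable def WongV {R : Type*} [Fintype R] {n l p : ℕ}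
    (E A : Matrix R (Fin n) ℝ) (B : Matrix R (Fin l) ℝ) (C : Matrix (Fin p) (Fin n) ℝ) :
    ℕ → Submodule ℝ (Fin n → ℝ)
  | 0 => LinearMap.ker C.mulVecLin
  | i + 1 =>
      (Submodule.comap A.mulVecLin
        (Submodule.map E.mulVecLin (WongV E A B C i) ⊔ LinearMap.range B.mulVecLin)) ⊓
        LinearMap.ker C.mulVecLin

/-! ### Auxiliary lemmas -/

open Module

/-- A product of submodules is linearly equivalent to the product of the submodules. -/
noncomputable def prodSubEquiv {M N : Type*} [AddCommGroup M] [AddCommGroup N]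
    [Module ℝ M] [Module ℝ N] (p : Submodule ℝ M) (q : Submodule ℝ N) :
    (p.prod q) ≃ₗ[ℝ] p × q where
  toFun x := (⟨x.val.1, x.property.1⟩, ⟨x.val.2, x.property.2⟩)
  invFun y := ⟨(y.1.val, y.2.val), ⟨y.1.property, y.2.property⟩⟩
  map_add' _ _ := rfl
  map_smul' _ _ := rfl
  left_inv _ := rfl
  right_inv _ := rfl

lemma range_prodMap' {M N M' N' : Type*} [AddCommGroup M] [AddCommGroup N]
    [AddCommGroup M'] [AddCommGroup N'] [Module ℝ M] [Module ℝ N] [Module ℝ M'] [Module ℝ N']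
    (f : M →ₗ[ℝ] M') (g : N →ₗ[ℝ] N') :
    LinearMap.range (f.prodMap g) = (LinearMap.range f).prod (LinearMap.range g) := by
  ext ⟨x, y⟩
  simp only [LinearMap.mem_range, Submodule.mem_prod, Prod.ext_iff]
  constructor
  · rintro ⟨⟨a, b⟩, h1, h2⟩; exact ⟨⟨a, h1⟩, ⟨b, h2⟩⟩
  · rintro ⟨⟨a, h1⟩, ⟨b, h2⟩⟩; exact ⟨(a, b), h1, h2⟩

/-- Rank is invariant under reindexing by equivalences (rectangular version). -/
lemma rank_submatrix'' {l m n o : Type*} [Fintype m] [Fintype n] [Fintype l] [Fintype o]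
    (A : Matrix m n ℝ) (e₁ : l ≃ m) (e₂ : o ≃ n) :
    (A.submatrix e₁ e₂).rank = A.rank := by
  have : A.submatrix e₁ e₂ = reindex e₁.symm e₂.symm A := rfl
  rw [this, Matrix.rank, Matrix.rank, mulVecLin_reindex, LinearMap.range_comp,
    LinearMap.range_comp, LinearEquiv.range, Submodule.map_top, LinearEquiv.finrank_map_eq]

/-- The rank of a block-diagonal matrix is the sum of the ranks of the blocks. -/
lemma rank_blkdiag {m₁ n₁ m₂ n₂ : Type*} [Fintype m₁] [Fintype n₁] [Fintype m₂] [Fintype n₂]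
    (A : Matrix m₁ n₁ ℝ) (D : Matrix m₂ n₂ ℝ) :
    (fromBlocks A 0 0 D).rank = A.rank + D.rank := by
  classical
  let e₁ := LinearEquiv.sumArrowLequivProdArrow m₁ m₂ ℝ ℝ
  let e₂ := LinearEquiv.sumArrowLequivProdArrow n₁ n₂ ℝ ℝ
  have key : (fromBlocks A 0 0 D).mulVecLin =
      (e₁.symm : (m₁ → ℝ) × (m₂ → ℝ) →ₗ[ℝ] _) ∘ₗ
        (A.mulVecLin.prodMap D.mulVecLin) ∘ₗ (e₂ : _ →ₗ[ℝ] (n₁ → ℝ) × (n₂ → ℝ)) := by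
    apply LinearMap.ext; intro v; funext p
    rcases p with p | p <;>
      simp [e₁, e₂, fromBlocks_mulVec, LinearEquiv.sumArrowLequivProdArrow,
        Equiv.sumArrowEquivProdArrow, Function.comp_def]
  rw [Matrix.rank, Matrix.rank, Matrix.rank, key]
  rw [LinearMap.range_comp, LinearMap.range_comp, LinearEquiv.range, Submodule.map_top,
    LinearEquiv.finrank_map_eq, range_prodMap']
  rw [(prodSubEquiv _ _).finrank_eq, Module.finrank_prod]

/-- Row `(i, r)` of `F_{k,[E,A]} v`. -/
lemma Fmat_mulVec {R C : Type*} [Fintype R] [Fintype C] {k : ℕ}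
    (E A : Matrix R C ℝ) (v : Fin k × C → ℝ) (i : Fin k) (r : R) :
    (Fmat k E A).mulVec v (i, r) =
      E.mulVec (fun c => v (i, c)) r +
      (if h : i.val + 1 < k then A.mulVec (fun c => v (⟨i.val + 1, h⟩, c)) r else 0) := by
  classical
  have : (Fmat k E A).mulVec v (i, r)
      = ∑ j : Fin k, ∑ c : C, (Fmat k E A) (i, r) (j, c) * v (j, c) := by
    rw [Matrix.mulVec, dotProduct, Fintype.sum_prod_type]
  rw [this]
  have split : ∀ j : Fin k, ∑ c : C, (Fmat k E A) (i, r) (j, c) * v (j, c)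
      = (if j = i then E.mulVec (fun c => v (i, c)) r else 0)
        + (if (j : ℕ) = i.val + 1 then A.mulVec (fun c => v (j, c)) r else 0) := by
    intro j
    by_cases h1 : (j : ℕ) = i.val
    · have : j = i := Fin.ext h1
      subst this
      simp [Fmat, Matrix.mulVec, dotProduct, Nat.ne_of_gt (Nat.lt_succ_self _), mul_comm]
    · have hne : j ≠ i := fun h => h1 (by rw [h])
      by_cases h2 : (j : ℕ) = i.val + 1
      · simp [Fmat, h1, h2, hne, Matrix.mulVec, dotProduct, mul_comm]
      · simp [Fmat, h1, h2, hne]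
  rw [Finset.sum_congr rfl (fun j _ => split j), Finset.sum_add_distrib]
  congr 1
  · simp
  · by_cases h : i.val + 1 < k
    · rw [dif_pos h, Finset.sum_eq_single (⟨i.val + 1, h⟩ : Fin k)]
      · simp
      · intro j _ hj
        rw [if_neg (fun hc => hj (Fin.ext hc))]
      · simp
    · rw [dif_neg h, Finset.sum_eq_zero]
      intro j _
      exact if_neg (fun hc : (j : ℕ) = i.val + 1 => h (hc ▸ j.isLt))

/-- If `E` has injective `mulVecLin`, then so does `F_{k,[E,A]}`. -/
lemma Fmat_inj {R C : Type*} [Fintype R] [Fintype C] {k : ℕ}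
    (E A : Matrix R C ℝ) (hE : Function.Injective E.mulVecLin) :
    Function.Injective (Fmat k E A).mulVecLin := by
  rw [← LinearMap.ker_eq_bot] at hE ⊢
  rw [LinearMap.ker_eq_bot'] at hE ⊢
  intro v hv
  have row : ∀ (i : Fin k) (r : R), E.mulVec (fun c => v (i, c)) r +
      (if h : i.val + 1 < k then A.mulVec (fun c => v (⟨i.val + 1, h⟩, c)) r else 0) = 0 := by
    intro i r
    rw [← Fmat_mulVec E A v i r]
    exact congrFun hv (i, r)
  have key : ∀ (j : ℕ) (i : Fin k), k ≤ i.val + j + 1 → (fun c => v (i, c)) = 0 := by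
    intro j
    induction j with
    | zero =>
      intro i hi
      apply hE
      funext r
      have := row i r
      rw [dif_neg (by omega)] at this
      simpa using this
    | succ j ih =>
      intro i hi
      by_cases h : i.val + 1 < k
      · have hnext : (fun c => v ((⟨i.val + 1, h⟩ : Fin k), c)) = 0 := ih _ (by simp; omega)
        apply hE
        funext r
        have := row i r
        rw [dif_pos h, hnext] at this
        simpa using this
      · apply hE
        funext r
        have := row i r
        rw [dif_neg h] at this
        simpa using this
  funext p
  obtain ⟨i, c⟩ := p
  exact congrFun (key k i (by omega)) c

/-- Reversing the block order turns the transpose of `F_{k,[E,A]}` into `F_{k,[Eᵀ,Aᵀ]}`. -/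
lemma Fmat_transpose_rev {R C : Type*} [Fintype R] [Fintype C] {k : ℕ}
    (E A : Matrix R C ℝ) :
    ((Fmat k E A)ᵀ).submatrix
        (Equiv.prodCongr (Fin.revPerm (n := k)) (Equiv.refl C))
        (Equiv.prodCongr (Fin.revPerm (n := k)) (Equiv.refl R)) = Fmat k Eᵀ Aᵀ := by
  ext ⟨j, c⟩ ⟨i, r⟩
  have hi := i.isLt
  have hj := j.isLt
  simp only [submatrix_apply, Equiv.prodCongr_apply, Prod.map, Equiv.refl_apply,
    transpose_apply, Fmat, Matrix.of_apply, Fin.revPerm_apply, Fin.val_rev]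
  by_cases h1 : (i : ℕ) = (j : ℕ)
  · rw [if_pos (show k - ((j:ℕ) + 1) = k - ((i:ℕ) + 1) by omega), if_pos h1]
  · rw [if_neg (show ¬(k - ((j:ℕ) + 1) = k - ((i:ℕ) + 1)) by omega), if_neg h1]
    by_cases h2 : (i : ℕ) = (j : ℕ) + 1
    · rw [if_pos (show k - ((j:ℕ) + 1) = k - ((i:ℕ) + 1) + 1 by omega), if_pos h2]
    · rw [if_neg (show ¬(k - ((j:ℕ) + 1) = k - ((i:ℕ) + 1) + 1) by omega), if_neg h2]

/-- `F_{k,[·,·]}` of a block-diagonal pair reindexes to a block-diagonal of `F`s. -/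
lemma Fmat_blkdiag_reindex {R₁ C₁ R₂ C₂ : Type*} [Fintype R₁] [Fintype C₁]
    [Fintype R₂] [Fintype C₂] {k : ℕ}
    (E₁ A₁ : Matrix R₁ C₁ ℝ) (E₂ A₂ : Matrix R₂ C₂ ℝ) :
    (Fmat k (fromBlocks E₁ 0 0 E₂) (fromBlocks A₁ 0 0 A₂)).submatrix
        (Equiv.prodSumDistrib (Fin k) R₁ R₂).symm
        (Equiv.prodSumDistrib (Fin k) C₁ C₂).symm =
      fromBlocks (Fmat k E₁ A₁) 0 0 (Fmat k E₂ A₂) := by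
  ext p q
  rcases p with ⟨i, r⟩ | ⟨i, r⟩ <;> rcases q with ⟨j, c⟩ | ⟨j, c⟩ <;>
    simp [Fmat, fromBlocks, Equiv.prodSumDistrib, Equiv.sumCongr, apply_ite (fun x => x)]

lemma rank_Fmat_blkdiag {R₁ C₁ R₂ C₂ : Type*} [Fintype R₁] [Fintype C₁]
    [Fintype R₂] [Fintype C₂] {k : ℕ}
    (E₁ A₁ : Matrix R₁ C₁ ℝ) (E₂ A₂ : Matrix R₂ C₂ ℝ) :
    (Fmat k (fromBlocks E₁ 0 0 E₂) (fromBlocks A₁ 0 0 A₂)).rank =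
      (Fmat k E₁ A₁).rank + (Fmat k E₂ A₂).rank := by
  rw [← rank_blkdiag, ← Fmat_blkdiag_reindex, rank_submatrix'']

/-- If `E` has full column rank (its `mulVecLin` is injective), `F_{k,[E,A]}` has full
column rank. -/
lemma rank_Fmat_of_inj {R C : Type*} [Fintype R] [Fintype C] {k : ℕ}
    (E A : Matrix R C ℝ) (hE : Function.Injective E.mulVecLin) :
    (Fmat k E A).rank = k * Fintype.card C := by
  rw [Matrix.rank, LinearMap.finrank_range_of_inj (Fmat_inj E A hE)]
  simp [Module.finrank_pi]

lemma inj_of_rank_eq_card {R C : Type*} [Fintype R] [Fintype C]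
    (E : Matrix R C ℝ) (h : E.rank = Fintype.card C) :
    Function.Injective E.mulVecLin := by
  rw [← LinearMap.ker_eq_bot]
  have h2 := LinearMap.finrank_range_add_finrank_ker E.mulVecLin
  rw [show finrank ℝ (C → ℝ) = Fintype.card C by simp] at h2
  have h3 : finrank ℝ (LinearMap.range E.mulVecLin) = Fintype.card C := h
  have h4 : finrank ℝ (LinearMap.ker E.mulVecLin) = 0 := by omega
  exact Submodule.finrank_eq_zero.mp h4

/-- If `E` has full row rank, `F_{k,[E,A]}` has full row rank. -/
lemma rank_Fmat_of_fullrow {R C : Type*} [Fintype R] [Fintype C] [DecidableEq R] {k : ℕ}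
    (E A : Matrix R C ℝ) (hE : E.rank = Fintype.card R) :
    (Fmat k E A).rank = k * Fintype.card R := by
  have h1 : (Fmat k E A).rank = (Fmat k Eᵀ Aᵀ).rank := by
    rw [← Fmat_transpose_rev, rank_submatrix'', rank_transpose]
  rw [h1]
  exact rank_Fmat_of_inj Eᵀ Aᵀ (inj_of_rank_eq_card Eᵀ (by rw [rank_transpose]; exact hE))

/-- A nilpotent `d × d` matrix satisfies `J ^ d = 0`. -/
lemma nilp_pow_card_eq_zero {d : ℕ} (J : Matrix (Fin d) (Fin d) ℝ) (h : IsNilpotent J) :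
    J ^ d = 0 := by
  let e := Matrix.toLinAlgEquiv' (R := ℝ) (n := Fin d)
  have hφ : IsNilpotent (e J) := by
    obtain ⟨m, hm⟩ := h
    exact ⟨m, by rw [← map_pow, hm, map_zero]⟩
  have hc : LinearMap.charpoly (e J) = Polynomial.X ^ finrank ℝ (Fin d → ℝ) :=
    IsNilpotent.charpoly_eq_X_pow_finrank hφ
  have ha := LinearMap.aeval_self_charpoly (e J)
  rw [hc] at ha
  have hd : finrank ℝ (Fin d → ℝ) = d := by simp
  rw [hd, map_pow, Polynomial.aeval_X] at ha
  have : e (J ^ d) = e 0 := by rw [map_pow, map_zero]; exact ha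
  exact e.injective this

/-- The kernel of `F_{k,[J,1]}` for `J` with `J ^ k = 0` has dimension `nσ`. -/
lemma Fmat_nilp_ker {nσ k : ℕ} (J : Matrix (Fin nσ) (Fin nσ) ℝ) (hk : 0 < k)
    (hJ : J ^ k = 0) :
    finrank ℝ (LinearMap.ker (Fmat k J (1 : Matrix (Fin nσ) (Fin nσ) ℝ)).mulVecLin) = nσ := by
  set Φ : Matrix (Fin k × Fin nσ) (Fin nσ) ℝ :=
    Matrix.of (fun p c => ((-J) ^ (p.1 : ℕ)) p.2 c) with hΦ
  have Φ_apply : ∀ (x : Fin nσ → ℝ) (i : Fin k) (r : Fin nσ),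
      Φ.mulVec x (i, r) = ((-J) ^ (i : ℕ)).mulVec x r := fun x i r => rfl
  have hJneg : ∀ m : ℕ, J * (-J) ^ m = (-1 : ℝ) ^ m • J ^ (m + 1) := by
    intro m
    rw [show -J = (-1 : ℝ) • J from (neg_one_smul ℝ J).symm, smul_pow, mul_smul_comm,
      ← pow_succ']
  have hker : LinearMap.ker (Fmat k J (1 : Matrix (Fin nσ) (Fin nσ) ℝ)).mulVecLin =
      LinearMap.range Φ.mulVecLin := by
    ext v
    simp only [LinearMap.mem_ker, LinearMap.mem_range, Matrix.mulVecLin_apply]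
    constructor
    · intro hv
      have row : ∀ (i : Fin k) (r : Fin nσ), J.mulVec (fun c => v (i, c)) r +
          (if h : i.val + 1 < k then v (⟨i.val + 1, h⟩, r) else 0) = 0 := by
        intro i r
        have := congrFun hv (i, r)
        rw [Fmat_mulVec] at this
        convert this using 2
        split <;> simp [Matrix.one_mulVec]
        rfl
      refine ⟨fun c => v (⟨0, hk⟩, c), ?_⟩
      have claim : ∀ (m : ℕ) (hm : m < k), (fun c => v (⟨m, hm⟩, c)) =
          ((-J) ^ m).mulVec (fun c => v (⟨0, hk⟩, c)) := by
        intro m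
        induction m with
        | zero => intro hm; simp [Matrix.one_mulVec]
        | succ m ih =>
          intro hm
          have hmk : m < k := by omega
          funext r
          have := row ⟨m, hmk⟩ r
          rw [dif_pos (show m + 1 < k from hm)] at this
          have hv' : v (⟨m + 1, hm⟩, r) = -(J.mulVec (fun c => v (⟨m, hmk⟩, c)) r) := by
            linarith [this]
          rw [hv', ih hmk, pow_succ' (-J) m]
          rw [← Matrix.mulVec_mulVec]
          simp [Matrix.neg_mulVec]
      funext p
      obtain ⟨i, r⟩ := p
      rw [Φ_apply]
      exact (congrFun (claim i.val i.isLt) r).symm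
    · rintro ⟨x, rfl⟩
      funext p
      obtain ⟨i, r⟩ := p
      rw [Fmat_mulVec]
      by_cases h : i.val + 1 < k
      · rw [dif_pos h]
        have h1 : J.mulVec (fun c => Φ.mulVec x (i, c)) r =
            (J * (-J) ^ (i : ℕ)).mulVec x r := by
          rw [← Matrix.mulVec_mulVec]; congr 1
        have h2 : (1 : Matrix (Fin nσ) (Fin nσ) ℝ).mulVec
              (fun c => Φ.mulVec x (⟨i.val + 1, h⟩, c)) r =
            ((-J) ^ ((i : ℕ) + 1)).mulVec x r := by
          rw [Matrix.one_mulVec]; exact Φ_apply x ⟨i.val + 1, h⟩ r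
        rw [h1, h2]
        show _ = (0 : ℝ)
        have hz : J * (-J) ^ (i : ℕ) + (-J) ^ ((i : ℕ) + 1) = 0 := by
          rw [pow_succ' (-J), neg_mul, add_neg_cancel]
        calc (J * (-J) ^ (i : ℕ)).mulVec x r + ((-J) ^ ((i : ℕ) + 1)).mulVec x r
            = ((J * (-J) ^ (i : ℕ) + (-J) ^ ((i : ℕ) + 1)).mulVec x) r := by
              rw [Matrix.add_mulVec]; rfl
          _ = 0 := by rw [hz, Matrix.zero_mulVec]; rfl
      · rw [dif_neg h, add_zero]
        have hik : (i : ℕ) + 1 = k := by omega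
        have h1 : J.mulVec (fun c => Φ.mulVec x (i, c)) r =
            (J * (-J) ^ (i : ℕ)).mulVec x r := by
          rw [← Matrix.mulVec_mulVec]; congr 1
        rw [h1, hJneg, hik, hJ, smul_zero, Matrix.zero_mulVec]
        rfl
  rw [hker]
  have hinj : Function.Injective Φ.mulVecLin := by
    rw [← LinearMap.ker_eq_bot, LinearMap.ker_eq_bot']
    intro x hx
    funext r
    have := congrFun hx (⟨0, hk⟩, r)
    rw [Matrix.mulVecLin_apply, Φ_apply] at this
    simpa [Matrix.one_mulVec] using this
  rw [LinearMap.finrank_range_of_inj hinj]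
  simp [Module.finrank_pi]

/-- Rank of `F_{k,[J,1]}` for a nilpotent block. -/
lemma rank_Fmat_nilp {nσ k : ℕ} (J : Matrix (Fin nσ) (Fin nσ) ℝ) (hk : 0 < k)
    (hJ : J ^ k = 0) :
    (Fmat k J (1 : Matrix (Fin nσ) (Fin nσ) ℝ)).rank = k * nσ - nσ := by
  have h2 := LinearMap.finrank_range_add_finrank_ker
    (Fmat k J (1 : Matrix (Fin nσ) (Fin nσ) ℝ)).mulVecLin
  rw [Fmat_nilp_ker J hk hJ] at h2
  have h3 : finrank ℝ (Fin k × Fin nσ → ℝ) = k * nσ := by simp [Module.finrank_pi]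
  rw [h3] at h2
  rw [Matrix.rank]
  omega

/-- For `E = blkdiag(E_ε, I, J_σ, E_η)` and `A = blkdiag(A_ε, J_f, I, A_η)` with `E_ε`
of full row rank, `J_σ` nilpotent and `E_η` of full column rank,
`rank F_{n+1,[E,A]} = (n+1)(m_ε + n_f + n_η) + n·n_σ`. -/
theorem stmt_15 {mε nε nf nσ mη nη : ℕ}
    (Eε Aε : Matrix (Fin mε) (Fin nε) ℝ)
    (Jf : Matrix (Fin nf) (Fin nf) ℝ)
    (Jσ : Matrix (Fin nσ) (Fin nσ) ℝ)
    (Eη Aη : Matrix (Fin mη) (Fin nη) ℝ)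
    (hEε : Eε.rank = mε)
    (hJσ : IsNilpotent Jσ)
    (hEη : Eη.rank = nη)
    (n : ℕ) (hn : n = nε + nf + nσ + nη) :
    (Fmat (n + 1)
        (Matrix.fromBlocks Eε 0 0
          (Matrix.fromBlocks (1 : Matrix (Fin nf) (Fin nf) ℝ) 0 0
            (Matrix.fromBlocks Jσ 0 0 Eη)))
        (Matrix.fromBlocks Aε 0 0
          (Matrix.fromBlocks Jf 0 0
            (Matrix.fromBlocks (1 : Matrix (Fin nσ) (Fin nσ) ℝ) 0 0 Aη)))).rank =
      (n + 1) * (mε + nf + nη) + n * nσ := by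
  rw [rank_Fmat_blkdiag, rank_Fmat_blkdiag, rank_Fmat_blkdiag]
  have hε : (Fmat (n + 1) Eε Aε).rank = (n + 1) * mε := by
    rw [rank_Fmat_of_fullrow Eε Aε (by simpa using hEε)]
    simp
  have hf : (Fmat (n + 1) (1 : Matrix (Fin nf) (Fin nf) ℝ) Jf).rank = (n + 1) * nf := by
    rw [rank_Fmat_of_inj _ Jf (by rw [Matrix.mulVecLin_one]; exact fun a b h => h)]
    simp
  have hσ : (Fmat (n + 1) Jσ (1 : Matrix (Fin nσ) (Fin nσ) ℝ)).rank = n * nσ := by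
    have hpow : Jσ ^ (n + 1) = 0 :=
      pow_eq_zero_of_le (by omega) (nilp_pow_card_eq_zero Jσ hJσ)
    rw [rank_Fmat_nilp Jσ (Nat.succ_pos n) hpow, Nat.succ_mul, Nat.add_sub_cancel]
  have hη : (Fmat (n + 1) Eη Aη).rank = (n + 1) * nη := by
    rw [rank_Fmat_of_inj Eη Aη (inj_of_rank_eq_card Eη (by simpa using hEη))]
    simp
  rw [hε, hf, hσ, hη]
  ring
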